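/- Let μ be a directed metric on a nonempty finite set S, let V be a set with S ⊆ V, and let d, d' be two cyclically tight extensions of μ on V. Then d and d' are congruent if and only if for every x ∈ V the difference d_x − d'_x lies in ℝe, where e ∈ ℝ^{S^{cr}} has e^c ≡ 1 and e^r ≡ −1. -/

import Mathlib

open scoped BigOperators

/-- Points of `ℝ^{S^{cr}}`: pairs `p = (p^c, p^r)` of functions `S → ℝ`,
with the componentwise partial order (the product/pi order). -/
abbrev Pt (S : Type*) := (S → ℝ) × (S → ℝ)

/-- `μ` is a directed distance: nonnegative with zero diagonal. -/
def DirDist {S : Type*} (μ : S → S → ℝ) : Prop :=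
  (∀ s t, 0 ≤ μ s t) ∧ (∀ s, μ s s = 0)

/-- `d` is a directed metric: a directed distance satisfying the triangle inequality. -/
def DirMetric {V : Type*} (d : V → V → ℝ) : Prop :=
  DirDist d ∧ ∀ x y z, d x z ≤ d x y + d y z

/-- The polyhedron `Π_μ`. -/
def PiP {S : Type*} (μ : S → S → ℝ) : Set (Pt S) :=
  {p | ∀ s t, μ s t ≤ p.1 s + p.2 t}

/-- The polyhedron `P_μ = Π_μ ∩ ℝ_+^{S^{cr}}`. -/
def PP {S : Type*} (μ : S → S → ℝ) : Set (Pt S) :=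
  {p ∈ PiP μ | 0 ≤ p}

/-- The directed tight span `T_μ`: minimal elements of `P_μ`. -/
def TT {S : Type*} (μ : S → S → ℝ) : Set (Pt S) :=
  {p ∈ PP μ | ∀ q ∈ PP μ, q ≤ p → q = p}

/-- `Q_μ`: minimal elements of `Π_μ`. -/
def QQ {S : Type*} (μ : S → S → ℝ) : Set (Pt S) :=
  {p ∈ PiP μ | ∀ q ∈ PiP μ, q ≤ p → q = p}

/-- `Q_μ^+ = Q_μ ∩ ℝ_+^{S^{cr}}`. -/
def QP {S : Type*} (μ : S → S → ℝ) : Set (Pt S) :=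
  QQ μ ∩ {p | 0 ≤ p}

/-- `D_∞^+(f,g) = max_x (g(x) - f(x))_+`. -/
noncomputable def Dplus {X : Type*} [Fintype X] (f g : X → ℝ) : ℝ :=
  ⨆ x, max (g x - f x) 0

/-- `D_∞(p,q) = max ( D_∞^+(p^c,q^c), D_∞^+(q^r,p^r) )`. -/
noncomputable def Dinf {S : Type*} [Fintype S] (p q : Pt S) : ℝ :=
  max (Dplus p.1 q.1) (Dplus q.2 p.2)

/-- A subset `R` is balanced if no pair `p, q ∈ R` satisfies `p^c < q^c`,
and no pair satisfies `p^r < q^r`. -/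
def BalancedSet {S : Type*} (R : Set (Pt S)) : Prop :=
  (¬ ∃ p ∈ R, ∃ q ∈ R, ∀ s, p.1 s < q.1 s) ∧
  (¬ ∃ p ∈ R, ∃ q ∈ R, ∀ s, p.2 s < q.2 s)

/-- The vector `e = (1, -1)` spanning the linearity space of `Π_μ`. -/
def eVec (S : Type*) : Pt S := (fun _ => 1, fun _ => -1)

/-- `R ⊆ Q_μ` is a section: every point of `Q_μ` differs from exactly one point
of `R` by a multiple of `e`. -/
def IsSection {S : Type*} (μ : S → S → ℝ) (R : Set (Pt S)) : Prop :=
  R ⊆ QQ μ ∧ ∀ q ∈ QQ μ, ∃! p, p ∈ R ∧ ∃ α : ℝ, q - p = α • eVec S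

/-- The length of the cycle `(x 0, x 1, …, x m)` with respect to `d`. -/
def cycLen {V : Type*} (d : V → V → ℝ) (m : ℕ) (x : Fin (m + 1) → V) : ℝ :=
  ∑ i, d (x i) (x (i + 1))


/-- The point `d_x ∈ ℝ^{S^{cr}}` associated with `x ∈ V`. -/
def dVec {V : Type*} (S : Set V) (d : V → V → ℝ) (x : V) : Pt S :=
  (fun s => d s x, fun s => d x s)

/-- `(V,d)` is a cyclically tight extension of `(S,μ)`. -/
def IsCycTightExt {V : Type*} (S : Set V) (μ : S → S → ℝ) (d : V → V → ℝ) : Prop :=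
  DirMetric d ∧ (∀ s t : S, d s t = μ s t) ∧
  ¬ ∃ d' : V → V → ℝ, DirMetric d' ∧ (∀ s t : S, d' s t = μ s t) ∧
      (∀ (m : ℕ) (x : Fin (m + 1) → V), cycLen d' m x ≤ cycLen d m x) ∧
      (∃ (m : ℕ) (x : Fin (m + 1) → V), cycLen d' m x < cycLen d m x)


lemma tele_cyc {V : Type*} (m : ℕ) (x : Fin (m+1) → V) (f : V → ℝ) :
    ∑ i : Fin (m+1), (f (x (i+1)) - f (x i)) = 0 := by
  have h : ∑ i : Fin (m+1), f (x (i+1)) = ∑ i : Fin (m+1), f (x i) :=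
    Fintype.sum_equiv (Equiv.addRight (1 : Fin (m+1)))
      (fun i => f (x (i+1))) (fun i => f (x i)) (fun i => rfl)
  rw [Finset.sum_sub_distrib, h, sub_self]

lemma key_half {V : Type*} (S : Set V) [Fintype S] (hS : S.Nonempty)
    (μ : S → S → ℝ)
    (d d' : V → V → ℝ)
    (hd : IsCycTightExt S μ d)
    (hd'm : DirMetric d')
    (α : V → ℝ)
    (hc : ∀ (x : V) (s : S), d s x = d' s x + α x)
    (hr : ∀ (x : V) (s : S), d x s = d' x s - α x) :
    ∀ (m : ℕ) (x : Fin (m+1) → V), cycLen d m x ≤ cycLen d' m x := by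
  by_contra hcon
  push_neg at hcon
  obtain ⟨m₀, x₀, hx₀⟩ := hcon
  haveI : Nonempty S := hS.to_subtype
  have hne : (Finset.univ : Finset S).Nonempty := Finset.univ_nonempty
  obtain ⟨hdm, hde, htight⟩ := hd
  obtain ⟨⟨hd0, hdd⟩, hdt⟩ := hdm
  obtain ⟨⟨hd'0, hd'd⟩, hd't⟩ := hd'm
  set D : V → V → ℝ := fun u v =>
    max (Finset.univ.sup' hne (fun s : S => d s v - d s u))
        (Finset.univ.sup' hne (fun s : S => d u s - d v s)) with hDdef
  have Dtri : ∀ u v w, D u w ≤ D u v + D v w := by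
    intro u v w
    apply max_le
    · apply Finset.sup'_le
      intro s _
      have h1 : d s v - d s u ≤ D u v :=
        le_trans (Finset.le_sup' (fun s : S => d s v - d s u) (Finset.mem_univ s)) (le_max_left _ _)
      have h2 : d s w - d s v ≤ D v w :=
        le_trans (Finset.le_sup' (fun s : S => d s w - d s v) (Finset.mem_univ s)) (le_max_left _ _)
      linarith
    · apply Finset.sup'_le
      intro s _
      have h1 : d u s - d v s ≤ D u v :=
        le_trans (Finset.le_sup' (fun t : S => d u t - d v t) (Finset.mem_univ s)) (le_max_right _ _)
      have h2 : d v s - d w s ≤ D v w :=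
        le_trans (Finset.le_sup' (fun t : S => d v t - d w t) (Finset.mem_univ s)) (le_max_right _ _)
      linarith
  have Dled : ∀ u v, D u v ≤ d u v := by
    intro u v
    apply max_le
    · apply Finset.sup'_le
      intro s _
      have := hdt s u v
      linarith
    · apply Finset.sup'_le
      intro s _
      have := hdt u v s
      linarith
  have Ddiag : ∀ u, D u u = 0 := by
    intro u
    apply le_antisymm
    · have := Dled u u
      rw [hdd u] at this
      exact this
    · obtain ⟨s₀⟩ := (inferInstance : Nonempty S)
      have h1 : d s₀ u - d s₀ u ≤ D u u :=
        le_trans (Finset.le_sup' (fun s : S => d s u - d s u) (Finset.mem_univ s₀)) (le_max_left _ _)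
      linarith
  have DS : ∀ s t : S, D s t = d s t := by
    intro s t
    apply le_antisymm (Dled _ _)
    have h1 : d s t - d s s ≤ D s t :=
      le_trans (Finset.le_sup' (fun s' : S => d s' t - d s' (s : V)) (Finset.mem_univ s)) (le_max_left _ _)
    rw [hdd (s : V)] at h1
    linarith
  have Dleg : ∀ u v, D u v ≤ d' u v - α u + α v := by
    intro u v
    apply max_le
    · apply Finset.sup'_le
      intro s _
      have h1 := hc v s
      have h2 := hc u s
      have h3 := hd't s u v
      linarith
    · apply Finset.sup'_le
      intro s _
      have h1 := hr u s
      have h2 := hr v s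
      have h3 := hd't u v s
      linarith
  set π : V → ℝ := fun v => Finset.univ.inf' hne (fun s : S => D s v) with hπdef
  have πtri : ∀ u v, π v ≤ π u + D u v := by
    intro u v
    obtain ⟨s, _, hs⟩ := Finset.exists_mem_eq_inf' hne (fun s : S => D s u)
    have h1 : π v ≤ D s v := Finset.inf'_le _ (Finset.mem_univ s)
    have h2 := Dtri (s : V) u v
    rw [hπdef]
    dsimp only
    rw [hs] at *
    calc π v ≤ D s v := h1
    _ ≤ D s u + D u v := h2
  have πS : ∀ t : S, π t = 0 := by
    intro t
    apply le_antisymm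
    · have h1 : π t ≤ D t t := Finset.inf'_le _ (Finset.mem_univ t)
      rw [Ddiag] at h1
      exact h1
    · apply Finset.le_inf'
      intro s _
      rw [DS s t]
      exact hd0 s t
  set D₂ : V → V → ℝ := fun u v => D u v + π u - π v with hD₂def
  have hcycD₂ : ∀ (m : ℕ) (x : Fin (m+1) → V), cycLen D₂ m x = cycLen D m x := by
    intro m x
    unfold cycLen
    have : ∀ i : Fin (m+1), D₂ (x i) (x (i+1)) =
        D (x i) (x (i+1)) - (π (x (i+1)) - π (x i)) := by
      intro i; rw [hD₂def]; ring
    rw [Finset.sum_congr rfl (fun i _ => this i), Finset.sum_sub_distrib,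
      tele_cyc m x π, sub_zero]
  apply htight
  refine ⟨D₂, ⟨⟨?_, ?_⟩, ?_⟩, ?_, ?_, m₀, x₀, ?_⟩
  · intro u v
    have := πtri u v
    rw [hD₂def]; dsimp only; linarith
  · intro u
    rw [hD₂def]; dsimp only; rw [Ddiag]; ring
  · intro u v w
    have := Dtri u v w
    rw [hD₂def]; dsimp only; linarith
  · intro s t
    rw [hD₂def]; dsimp only
    rw [πS s, πS t, DS s t, hde s t]; ring
  · intro m x
    rw [hcycD₂]
    unfold cycLen
    exact Finset.sum_le_sum (fun i _ => Dled _ _)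
  · rw [hcycD₂]
    calc cycLen D m₀ x₀
        ≤ ∑ i : Fin (m₀+1), (d' (x₀ i) (x₀ (i+1)) - α (x₀ i) + α (x₀ (i+1))) := by
          unfold cycLen
          exact Finset.sum_le_sum (fun i _ => Dleg _ _)
      _ = cycLen d' m₀ x₀ := by
          unfold cycLen
          have : ∀ i : Fin (m₀+1), d' (x₀ i) (x₀ (i+1)) - α (x₀ i) + α (x₀ (i+1)) =
              d' (x₀ i) (x₀ (i+1)) + (α (x₀ (i+1)) - α (x₀ i)) := fun i => by ring
          rw [Finset.sum_congr rfl (fun i _ => this i), Finset.sum_add_distrib,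
            tele_cyc m₀ x₀ α, add_zero]
      _ < cycLen d m₀ x₀ := hx₀


/-- Proposition 2.13 (1).  Two cyclically tight extensions `d, d'` of `μ` are
congruent iff `d_x - d'_x ∈ ℝe` for every `x ∈ V`. -/
theorem stmt14 {V : Type*} (S : Set V) [Fintype S] (hS : S.Nonempty)
    (μ : S → S → ℝ) (hμ : DirMetric μ)
    (d d' : V → V → ℝ)
    (hd : IsCycTightExt S μ d) (hd' : IsCycTightExt S μ d') :
    (∀ (m : ℕ) (x : Fin (m + 1) → V), cycLen d m x = cycLen d' m x) ↔
    (∀ x : V, ∃ α : ℝ, dVec S d x - dVec S d' x = α • eVec S) := by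
  constructor
  · intro hcong x
    obtain ⟨s₀, hs₀⟩ := hS
    set σ : S := ⟨s₀, hs₀⟩ with hσ
    have key3 : ∀ s t : S, d s x + d x t = d' s x + d' x t := by
      intro s t
      have h := hcong 2 ![(s : V), x, (t : V)]
      have e1 : cycLen d 2 ![(s : V), x, (t : V)] = d s x + d x t + d t s := by
        simp [cycLen, Fin.sum_univ_three]
      have e2 : cycLen d' 2 ![(s : V), x, (t : V)] = d' s x + d' x t + d' t s := by
        simp [cycLen, Fin.sum_univ_three]
      have hts : d (t : V) s = d' (t : V) s := by
        rw [hd.2.1 t s, hd'.2.1 t s]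
      rw [e1, e2] at h
      linarith
    refine ⟨d σ x - d' σ x, ?_⟩
    have hrc : ∀ t : S, d x t - d' x t = -(d σ x - d' σ x) := by
      intro t; have := key3 σ t; linarith
    have hcc : ∀ s : S, d s x - d' s x = d σ x - d' σ x := by
      intro s
      have h1 := key3 s σ
      have h2 := hrc σ
      linarith
    apply Prod.ext
    · funext s
      show d s x - d' s x = (d σ x - d' σ x) * 1
      rw [mul_one]; exact hcc s
    · funext s
      show d x s - d' x s = (d σ x - d' σ x) * (-1)
      rw [mul_neg_one]; exact hrc s
  · intro hα m x
    choose α hspec using hα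
    have hc : ∀ (y : V) (s : S), d s y = d' s y + α y := by
      intro y s
      have h := congrFun (congrArg Prod.fst (hspec y)) s
      simp only [dVec, eVec, Prod.fst_sub, Pi.sub_apply, Prod.smul_fst, Pi.smul_apply,
        smul_eq_mul, mul_one] at h
      linarith
    have hr : ∀ (y : V) (s : S), d y s = d' y s - α y := by
      intro y s
      have h := congrFun (congrArg Prod.snd (hspec y)) s
      simp only [dVec, eVec, Prod.snd_sub, Pi.sub_apply, Prod.smul_snd, Pi.smul_apply,
        smul_eq_mul, mul_neg_one] at h
      linarith
    have h1 := key_half S hS μ d d' hd hd'.1 α hc hr m x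
    have h2 := key_half S hS μ d' d hd' hd.1 (fun y => -(α y))
      (fun y s => by have := hc y s; linarith)
      (fun y s => by have := hr y s; simp; linarith) m x
    linarith
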